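/- Let H = ⟨x₁⟩ be a cyclic group of order 4 with involution t₁ = 2x₁, equipped with the commutative ring structure where x₁·x₁ = t₁ (extended biadditively, all other products determined). Then the group (H, ∘) with g ∘ h = g + h + g·h is elementary abelian of order 4; in particular (H, ∘) is not isomorphic to (H, +). -/

import Mathlib

theorem stmt_19 (mul : ZMod 4 → ZMod 4 → ZMod 4)
    (hmul : ∀ a b : ZMod 4, mul a b = 2 * a * b)
    (circ : ZMod 4 → ZMod 4 → ZMod 4)
    (hcirc : ∀ g h : ZMod 4, circ g h = g + h + mul g h) :
    (∀ g : ZMod 4, circ g g = 0) ∧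
    ¬ ∃ φ : ZMod 4 ≃ ZMod 4, ∀ a b : ZMod 4, φ (a + b) = circ (φ a) (φ b) := by
  have hzero : ∀ g : ZMod 4, circ g g = 0 := by
    intro g; rw [hcirc, hmul]; revert g; decide
  refine ⟨hzero, ?_⟩
  rintro ⟨φ, hφ⟩
  have h0 : φ 0 = 0 := by have := hφ 0 0; simpa [hzero] using this
  have h2 : φ 2 = 0 := by have := hφ 1 1; rw [hzero] at this; simpa [one_add_one_eq_two] using this
  exact absurd (φ.injective (h2.trans h0.symm)) (by decide)
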